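/- (Double complex closed-range lemma) Let (L^{i,j})_{i,j≥0} be a double complex of topological vector spaces (Fréchet or duals of Fréchet) with horizontal differentials d and vertical differentials ∂, augmented by complexes (K^i, ∂) on the left and (H^j, d) on top, such that every row 0 → K^i → L^{i,0} → L^{i,1} → ⋯ and every column 0 → H^j → L^{0,j} → L^{1,j} → ⋯ is exact, with K^*, H^* carrying the subspace topologies. If the differentials of the complex 0 → H^0 → H^1 → H^2 → ⋯ all have closed range, then the differentials of the complex 0 → K^0 → K^1 → K^2 → ⋯ also all have closed range. -/

import Mathlib

set_option synthInstance.maxHeartbeats 1000000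
set_option maxHeartbeats 2000000

open Filter Topology Set Uniformity Pointwise Bornology

namespace Stmt8Aux

variable {E F : Type*}
  [AddCommGroup E] [Module ℂ E] [UniformSpace E] [IsUniformAddGroup E]
  [ContinuousSMul ℂ E]
  [AddCommGroup F] [Module ℂ F] [UniformSpace F] [IsUniformAddGroup F]
  [ContinuousSMul ℂ F]

theorem closure_image_mem_nhds [CompleteSpace F] [TopologicalSpace.MetrizableSpace F]
    (T : E →L[ℂ] F) (hs : Function.Surjective T)
    {U : Set E} (hU : U ∈ 𝓝 (0 : E)) : closure (T '' U) ∈ 𝓝 (0 : F) := by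
  -- Baire category on `F`
  haveI : (𝓤 F).IsCountablyGenerated := by
    rw [uniformity_eq_comap_nhds_zero]; infer_instance
  letI : PseudoMetricSpace F := UniformSpace.pseudoMetricSpace F
  haveI : BaireSpace F := BaireSpace.of_completelyPseudoMetrizable
  -- a neighborhood `V` of `0` with `V - V ⊆ U`
  obtain ⟨V, hV, hVU⟩ : ∃ V ∈ 𝓝 (0 : E), ∀ x ∈ V, ∀ y ∈ V, x - y ∈ U := by
    have h : Filter.Tendsto (fun p : E × E => p.1 - p.2) (𝓝 ((0 : E), (0 : E))) (𝓝 (0 : E)) := by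
      simpa using continuous_sub.tendsto ((0 : E), (0 : E))
    have h2 : (fun p : E × E => p.1 - p.2) ⁻¹' U ∈ 𝓝 ((0 : E), (0 : E)) := h hU
    rw [nhds_prod_eq] at h2
    obtain ⟨W₁, hW₁, W₂, hW₂, hW⟩ := Filter.mem_prod_iff.mp h2
    exact ⟨W₁ ∩ W₂, Filter.inter_mem hW₁ hW₂,
      fun x hx y hy => hW (Set.mk_mem_prod hx.1 hy.2)⟩
  -- the sequence `(n+1)⁻¹` tends to `0` within `≠ 0`
  have hseq : Filter.Tendsto (fun n : ℕ => ((n : ℂ) + 1)⁻¹) atTop (𝓝[≠] (0 : ℂ)) := by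
    have hcb : Filter.Tendsto (fun n : ℕ => ((n : ℂ) + 1)) atTop (Bornology.cobounded ℂ) := by
      rw [← comap_norm_atTop, Filter.tendsto_comap_iff]
      have h1 : Filter.Tendsto (fun n : ℕ => (n : ℝ) + 1) atTop atTop :=
        Filter.tendsto_atTop_add_const_right _ 1 tendsto_natCast_atTop_atTop
      refine h1.congr fun n => ?_
      show (n : ℝ) + 1 = ‖(n : ℂ) + 1‖
      have h2 : ((n : ℂ) + 1) = ((n + 1 : ℕ) : ℂ) := by push_cast; ring
      rw [h2, Complex.norm_natCast]; push_cast; ring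
    exact Filter.tendsto_inv₀_cobounded'.comp hcb
  have habs' := absorbent_iff_eventually_nhdsNE_zero.mp
    (absorbent_nhds_zero (𝕜 := ℂ) hV)
  -- covering of `F` by scaled closures
  have hcover : ⋃ n : ℕ, ((n : ℂ) + 1) • closure (T '' V) = univ := by
    refine Set.eq_univ_of_forall fun y => ?_
    obtain ⟨x, rfl⟩ := hs y
    obtain ⟨n, hn⟩ := (hseq.eventually (habs' x)).exists
    have hne : ((n : ℂ) + 1) ≠ 0 := by
      exact_mod_cast (Nat.cast_add_one_ne_zero (R := ℂ) n)
    refine Set.mem_iUnion.2 ⟨n, ?_⟩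
    refine Set.mem_smul_set.2 ⟨T (((n : ℂ) + 1)⁻¹ • x),
      subset_closure (Set.mem_image_of_mem _ hn), ?_⟩
    rw [map_smul, smul_inv_smul₀ hne]
  have hne' : ∀ n : ℕ, ((n : ℂ) + 1) ≠ 0 := fun n => by
    exact_mod_cast (Nat.cast_add_one_ne_zero (R := ℂ) n)
  obtain ⟨n, hni⟩ := nonempty_interior_of_iUnion_of_closed
    (f := fun n : ℕ => ((n : ℂ) + 1) • closure (T '' V))
    (fun n => isClosed_closure.smul_of_ne_zero (hne' n)) hcover
  rw [interior_smul₀ (hne' n)] at hni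
  obtain ⟨_, y₀, hy₀, rfl⟩ := hni
  -- conclude
  have hopen : IsOpen ((· + y₀) ⁻¹' interior (closure (T '' V))) :=
    isOpen_interior.preimage (continuous_add_right y₀)
  have h0 : (0 : F) ∈ (· + y₀) ⁻¹' interior (closure (T '' V)) := by simpa using hy₀
  refine Filter.mem_of_superset (hopen.mem_nhds h0) fun z hz => ?_
  have h1 : z + y₀ ∈ closure (T '' V) := interior_subset hz
  have h2 : y₀ ∈ closure (T '' V) := interior_subset hy₀
  have h3 := map_mem_closure₂ (f := fun a b : F => a - b) continuous_sub h1 h2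
    (u := T '' U) (fun a ha b hb => ?_)
  · simpa using h3
  · obtain ⟨p, hp, rfl⟩ := ha
    obtain ⟨q, hq, rfl⟩ := hb
    exact ⟨p - q, hVU p hp q hq, map_sub T p q⟩


theorem image_mem_nhds [CompleteSpace E] [TopologicalSpace.MetrizableSpace E]
    [CompleteSpace F] [TopologicalSpace.MetrizableSpace F]
    (T : E →L[ℂ] F) (hs : Function.Surjective T)
    {U : Set E} (hU : U ∈ 𝓝 (0 : E)) : T '' U ∈ 𝓝 (0 : F) := by
  obtain ⟨U', ⟨hU'm, hU'c⟩, hU'sub⟩ := (closed_nhds_basis (0 : E)).mem_iff.mp hU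
  simp only [id] at hU'sub
  suffices h : T '' U' ∈ 𝓝 (0 : F) from
    Filter.mem_of_superset h (Set.image_mono  hU'sub)
  clear hU'sub hU U
  obtain ⟨B, hB⟩ := (𝓝 (0 : E)).exists_antitone_basis
  -- a shrinking lemma
  have shrink : ∀ (S : Set E) (n : ℕ), S ∈ 𝓝 (0 : E) →
      ∃ V, V ∈ 𝓝 (0 : E) ∧ V ⊆ B n ∧ (∀ x ∈ V, -x ∈ V) ∧
        ∀ x ∈ V, ∀ y ∈ V, x + y ∈ S := by
    intro S n hS
    have h : Filter.Tendsto (fun p : E × E => p.1 + p.2) (𝓝 ((0 : E), (0 : E))) (𝓝 (0 : E)) := by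
      simpa using continuous_add.tendsto ((0 : E), (0 : E))
    have h2 : (fun p : E × E => p.1 + p.2) ⁻¹' S ∈ 𝓝 ((0 : E), (0 : E)) := h hS
    rw [nhds_prod_eq] at h2
    obtain ⟨W₁, hW₁, W₂, hW₂, hW⟩ := Filter.mem_prod_iff.mp h2
    set A : Set E := W₁ ∩ W₂ ∩ B n with hA
    have hAmem : A ∈ 𝓝 (0 : E) :=
      Filter.inter_mem (Filter.inter_mem hW₁ hW₂) (hB.toHasBasis.mem_of_mem trivial)
    have hnA : Neg.neg ⁻¹' A ∈ 𝓝 (0 : E) :=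
      continuous_neg.continuousAt.preimage_mem_nhds (by simpa using hAmem)
    refine ⟨A ∩ Neg.neg ⁻¹' A, Filter.inter_mem hAmem hnA, fun x hx => hx.1.2,
      fun x hx => ⟨hx.2, by simpa using hx.1⟩, fun x hx y hy => ?_⟩
    exact hW (Set.mk_mem_prod hx.1.1.1 hy.1.1.2)
  choose! sh hmem hsubB hsymm hadd using shrink
  -- the recursively shrunk neighborhoods
  set V : ℕ → Set E := fun n => Nat.rec (sh U' 0) (fun n Vn => sh Vn (n + 1)) n with hVdef
  have hVsucc : ∀ n, V (n + 1) = sh (V n) (n + 1) := fun n => rfl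
  have hV0 : V 0 = sh U' 0 := rfl
  have hVmem : ∀ n, V n ∈ 𝓝 (0 : E) := by
    intro n
    induction n with
    | zero => exact hmem U' 0 hU'm
    | succ n ih => rw [hVsucc n]; exact hmem _ _ ih
  have hVB : ∀ n, V n ⊆ B n := by
    intro n
    cases n with
    | zero => exact hsubB U' 0 hU'm
    | succ n => rw [hVsucc n]; exact hsubB _ _ (hVmem n)
  have hVsym : ∀ n, ∀ x ∈ V n, -x ∈ V n := by
    intro n
    cases n with
    | zero => exact hsymm U' 0 hU'm
    | succ n => rw [hVsucc n]; exact hsymm _ _ (hVmem n)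
  have hVadd : ∀ n, ∀ x ∈ V (n + 1), ∀ y ∈ V (n + 1), x + y ∈ V n := by
    intro n
    rw [hVsucc n]; exact hadd _ _ (hVmem n)
  have hV0add : ∀ x ∈ V 0, ∀ y ∈ V 0, x + y ∈ U' := by
    rw [hV0]; exact hadd U' 0 hU'm
  have hV0mem : ∀ n, (0 : E) ∈ V n := fun n => mem_of_mem_nhds (hVmem n)
  have hVstep : ∀ n, V (n + 1) ⊆ V n := fun n x hx => by
    simpa using hVadd n x hx 0 (hV0mem (n + 1))
  have hVanti : ∀ m n, m ≤ n → V n ⊆ V m := by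
    intro m n hmn
    induction n with
    | zero => cases Nat.le_zero.mp hmn; exact fun x h => h
    | succ n ih =>
      rcases Nat.lt_or_ge m (n + 1) with h | h
      · exact fun x hx => ih (Nat.lt_succ_iff.mp h) (hVstep n hx)
      · cases le_antisymm hmn h; exact fun x h => h
  -- the choice of approximate preimages
  have key : ∀ (n : ℕ) (z : F), z ∈ closure (T '' V n) →
      ∃ x, x ∈ V n ∧ z - T x ∈ closure (T '' V (n + 1)) := by
    intro n z hz
    have h1 : closure (T '' V (n + 1)) ∈ 𝓝 (0 : F) :=
      closure_image_mem_nhds T hs (hVmem (n + 1))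
    have h2 : (fun w => z - w) ⁻¹' closure (T '' V (n + 1)) ∈ 𝓝 z := by
      apply ContinuousAt.preimage_mem_nhds (continuous_const.sub continuous_id).continuousAt
      simpa using h1
    obtain ⟨w, hw1, hw2⟩ := mem_closure_iff_nhds.mp hz _ h2
    obtain ⟨x, hx, rfl⟩ := hw2
    exact ⟨x, hx, hw1⟩
  choose! g hgV hgnext using key
  -- the main inclusion
  have main : closure (T '' V 0) ⊆ T '' U' := by
    intro y hy
    set z : ℕ → F := fun n => Nat.rec y (fun n zn => zn - T (g n zn)) n with hzdef
    have hzsucc : ∀ n, z (n + 1) = z n - T (g n (z n)) := fun n => rfl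
    have hz : ∀ n, z n ∈ closure (T '' V n) := by
      intro n
      induction n with
      | zero => exact hy
      | succ n ih => rw [hzsucc n]; exact hgnext n (z n) ih
    set x : ℕ → E := fun n => g n (z n) with hxdef
    have hxV : ∀ n, x n ∈ V n := fun n => hgV n (z n) (hz n)
    set s : ℕ → E := fun n => ∑ k ∈ Finset.range n, x k with hsdef
    have hzs : ∀ n, z n = y - T (s n) := by
      intro n
      induction n with
      | zero => simp [hsdef, show z 0 = y from rfl]
      | succ n ih =>
        rw [hzsucc n, ih]
        have h : s (n + 1) = s n + x n := by simp [hsdef, Finset.sum_range_succ]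
        rw [h, map_add, sub_sub, ← ih]
    -- partial-sum membership
    have hsum : ∀ (k n : ℕ), (∑ i ∈ Finset.Ico (n + 1) (n + k + 2), x i) ∈ V n := by
      intro k
      induction k with
      | zero =>
        intro n
        have h : Finset.Ico (n + 1) (n + 2) = {n + 1} := by
          rw [Nat.Ico_succ_singleton]
        rw [show n + 0 + 2 = n + 2 by ring, h, Finset.sum_singleton]
        exact hVstep n (hxV (n + 1))
      | succ k ih =>
        intro n
        have h : Finset.Ico (n + 1) (n + (k + 1) + 2) =
            insert (n + 1) (Finset.Ico (n + 2) (n + (k + 1) + 2)) := by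
          exact (Finset.insert_Ico_add_one_left_eq_Ico (by omega)).symm
        rw [h, Finset.sum_insert (by simp)]
        have htail : (∑ i ∈ Finset.Ico (n + 2) (n + (k + 1) + 2), x i) ∈ V (n + 1) := by
          have := ih (n + 1)
          rwa [show (n + 1) + 1 = n + 2 by ring, show (n + 1) + k + 2 = n + (k + 1) + 2 by ring]
            at this
        exact hVadd n _ (hxV (n + 1)) _ htail
    -- Cauchy
    have hcauchy : CauchySeq s := by
      rw [cauchySeq_iff]
      intro Vu hVu
      rw [uniformity_eq_comap_nhds_zero E] at hVu
      obtain ⟨W, hW, hWV⟩ := hVu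
      obtain ⟨j, -, hj⟩ := hB.toHasBasis.mem_iff.mp hW
      have hdiff : ∀ k l, j + 1 ≤ k → k ≤ l → s l - s k ∈ V j := by
        intro k l hjk hkl
        rcases eq_or_lt_of_le hkl with rfl | hlt
        · simpa using hV0mem j
        · have hsub : s l - s k = ∑ i ∈ Finset.Ico k l, x i :=
            (Finset.sum_Ico_eq_sub _ hkl).symm
          obtain ⟨m, rfl⟩ : ∃ m, k = m + 1 := ⟨k - 1, by omega⟩
          obtain ⟨d, rfl⟩ : ∃ d, l = m + d + 2 := ⟨l - m - 2, by omega⟩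
          rw [hsub]
          exact hVanti j m (by omega) (hsum d m)
      refine ⟨j + 1, fun k hk l hl => ?_⟩
      apply hWV
      show s l - s k ∈ W
      rcases le_total k l with h | h
      · exact hj (hVB j (hdiff k l hk h))
      · have := hVsym j _ (hdiff l k hl h)
        rw [neg_sub] at this
        exact hj (hVB j this)
    obtain ⟨a, ha⟩ := cauchySeq_tendsto_of_complete hcauchy
    have haU : a ∈ U' := by
      apply hU'c.mem_of_tendsto ha
      filter_upwards [Filter.eventually_ge_atTop 1] with n hn
      obtain ⟨m, rfl⟩ : ∃ m, n = m + 1 := ⟨n - 1, by omega⟩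
      cases m with
      | zero =>
        have : s 1 = x 0 := by simp [hsdef]
        rw [this]
        simpa using hV0add (x 0) (hxV 0) 0 (hV0mem 0)
      | succ m =>
        have h : s (m + 2) = x 0 + ∑ i ∈ Finset.Ico 1 (m + 2), x i := by
          show (∑ k ∈ Finset.range (m + 2), x k) = _
          rw [Finset.range_eq_Ico, ← Finset.insert_Ico_add_one_left_eq_Ico (by omega),
            Finset.sum_insert (by simp), zero_add]
        rw [h]
        refine hV0add _ (hxV 0) _ ?_
        have := hsum m 0
        simpa using this
    have hTa : T a = y := by
      have h1 : Filter.Tendsto (fun n => T (s n)) atTop (𝓝 (T a)) :=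
        (T.continuous.tendsto a).comp ha
      have h2 : Filter.Tendsto (fun n => y - T (s n)) atTop (𝓝 (0 : F)) := by
        rw [(closed_nhds_basis (0 : F)).tendsto_right_iff]
        rintro W' ⟨hW'm, hW'c⟩
        have hpre : T ⁻¹' W' ∈ 𝓝 (0 : E) :=
          T.continuous.continuousAt.preimage_mem_nhds (by rwa [map_zero])
        obtain ⟨j, -, hj⟩ := hB.toHasBasis.mem_iff.mp hpre
        filter_upwards [Filter.eventually_ge_atTop j] with n hn
        have hmem : y - T (s n) ∈ closure (T '' V n) := by rw [← hzs n]; exact hz n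
        have himg : T '' V n ⊆ W' := by
          rintro _ ⟨v, hv, rfl⟩
          exact hj (hB.antitone hn (hVB n hv))
        exact closure_minimal himg hW'c hmem
      have h3 : Filter.Tendsto (fun n => y - T (s n) + T (s n)) atTop (𝓝 (0 + T a)) :=
        h2.add h1
      have h4 : Filter.Tendsto (fun _ : ℕ => y) atTop (𝓝 (T a)) := by
        simpa using h3
      exact tendsto_nhds_unique h4 tendsto_const_nhds
    exact ⟨a, haU, hTa⟩
  exact Filter.mem_of_superset (closure_image_mem_nhds T hs (hVmem 0)) main


theorem frechet_isOpenMap [CompleteSpace E] [TopologicalSpace.MetrizableSpace E]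
    [CompleteSpace F] [TopologicalSpace.MetrizableSpace F]
    (T : E →L[ℂ] F) (hs : Function.Surjective T) : IsOpenMap T := by
  rw [isOpenMap_iff_nhds_le]
  intro x S hS
  rw [Filter.mem_map] at hS
  have hU : (fun e : E => e + x) ⁻¹' (T ⁻¹' S) ∈ 𝓝 (0 : E) :=
    ContinuousAt.preimage_mem_nhds (continuous_add_right x).continuousAt (by simpa using hS)
  have himg := image_mem_nhds T hs hU
  have h2 : (fun f : F => f + T x) '' (T '' ((fun e : E => e + x) ⁻¹' (T ⁻¹' S))) ∈
      𝓝 ((0 : F) + T x) := (isOpenMap_add_right (T x)).image_mem_nhds himg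
  rw [zero_add] at h2
  refine Filter.mem_of_superset h2 ?_
  rintro _ ⟨_, ⟨u, hu, rfl⟩, rfl⟩
  show T u + T x ∈ S
  have : T u + T x = T (u + x) := (map_add T u x).symm
  rw [this]
  exact hu

theorem image_closed_of_saturated [CompleteSpace E] [TopologicalSpace.MetrizableSpace E]
    [CompleteSpace F] [TopologicalSpace.MetrizableSpace F]
    (T : E →L[ℂ] F) (hR : IsClosed (Set.range T)) {W : Set E} (hW : IsClosed W)
    (hsat : ∀ x y, T x = T y → x ∈ W → y ∈ W) : IsClosed (T '' W) := by
  set R : Submodule ℂ F := LinearMap.range (T : E →ₗ[ℂ] F) with hRdef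
  have hRset : (R : Set F) = Set.range T := by
    ext w; simp [hRdef, LinearMap.mem_range]
  have hRclosed : IsClosed (R : Set F) := by rw [hRset]; exact hR
  haveI : CompleteSpace R := hRclosed.completeSpace_coe
  haveI : IsUniformAddGroup R := R.toAddSubgroup.isUniformAddGroup
  haveI : TopologicalSpace.MetrizableSpace R :=
    Topology.IsEmbedding.subtypeVal.metrizableSpace
  let T' : E →L[ℂ] R := T.codRestrict R fun x => LinearMap.mem_range_self _ x
  have hs' : Function.Surjective T' := by
    rintro ⟨yy, hyy⟩
    obtain ⟨u, hu⟩ := LinearMap.mem_range.mp hyy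
    exact ⟨u, Subtype.ext hu⟩
  have hopen : IsOpenMap T' := frechet_isOpenMap T' hs'
  have hcompl : T' '' Wᶜ = (T' '' W)ᶜ := by
    ext yy
    constructor
    · rintro ⟨u, hu, rfl⟩ ⟨w, hw, he⟩
      have : T w = T u := congrArg Subtype.val he
      exact hu (hsat w u this hw)
    · intro hyy
      obtain ⟨u, hu⟩ := hs' yy
      exact ⟨u, fun huW => hyy ⟨u, huW, hu⟩, hu⟩
  have hclosedR : IsClosed (T' '' W) := by
    rw [← isOpen_compl_iff, ← hcompl]
    exact hopen _ hW.isOpen_compl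
  have heq : T '' W = Subtype.val '' (T' '' W) := by
    ext w
    constructor
    · rintro ⟨u, hu, rfl⟩; exact ⟨T' u, ⟨u, hu, rfl⟩, rfl⟩
    · rintro ⟨_, ⟨u, hu, rfl⟩, rfl⟩; exact ⟨u, hu, rfl⟩
  rw [heq]
  exact hRclosed.isClosedEmbedding_subtypeVal.isClosedMap _ hclosedR

theorem key {G : Type*} [AddCommGroup G] [Module ℂ G] [UniformSpace G]
    [IsUniformAddGroup G] [ContinuousSMul ℂ G]
    [CompleteSpace E] [TopologicalSpace.MetrizableSpace E]
    [CompleteSpace F] [TopologicalSpace.MetrizableSpace F]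
    (T : E →L[ℂ] F) (d : E →L[ℂ] G)
    (h1 : IsClosed (Set.range T)) (h2 : IsClosed (d '' {v : E | T v = 0})) :
    IsClosed (T '' {v : E | d v = 0}) := by
  have hW' : IsClosed (d ⁻¹' (d '' {v : E | T v = 0})) := h2.preimage d.continuous
  have heq : T '' {v : E | d v = 0} = T '' (d ⁻¹' (d '' {v : E | T v = 0})) := by
    apply subset_antisymm
    · apply Set.image_mono
      intro v hv
      exact ⟨0, by simp, by simp [Set.mem_setOf_eq.mp hv]⟩
    · rintro _ ⟨v, hv, rfl⟩
      obtain ⟨u, hu, he⟩ := hv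
      refine ⟨v - u, ?_, ?_⟩
      · show d (v - u) = 0
        rw [map_sub, he, sub_self]
      · rw [map_sub, Set.mem_setOf_eq.mp hu, sub_zero]
  rw [heq]
  apply image_closed_of_saturated T h1 hW'
  intro v w hvw hv
  obtain ⟨u, hu, he⟩ := hv
  refine ⟨u + (w - v), ?_, ?_⟩
  · show T (u + (w - v)) = 0
    rw [map_add, map_sub, Set.mem_setOf_eq.mp hu, hvw, sub_self, add_zero]
  · show d (u + (w - v)) = d w
    rw [map_add, map_sub, he]
    abel


universe u

theorem aux : ∀ (i : ℕ) {L : ℕ → ℕ → Type u}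
    [I1 : ∀ a b, AddCommGroup (L a b)] [I2 : ∀ a b, Module ℂ (L a b)]
    [I3 : ∀ a b, UniformSpace (L a b)] [I4 : ∀ a b, IsUniformAddGroup (L a b)]
    [I5 : ∀ a b, ContinuousSMul ℂ (L a b)] [I6 : ∀ a b, CompleteSpace (L a b)]
    [I7 : ∀ a b, TopologicalSpace.MetrizableSpace (L a b)]
    (dh : ∀ a b, L a b →L[ℂ] L a (b + 1))
    (dv : ∀ a b, L a b →L[ℂ] L (a + 1) b)
    (hsq : ∀ a b, (dv a (b + 1)).comp (dh a b) = (dh (a + 1) b).comp (dv a b))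
    (hrow : ∀ a b, Set.range (dh a b) = {v | dh a (b + 1) v = 0})
    (hcol : ∀ a b, Set.range (dv a b) = {v | dv (a + 1) b v = 0})
    (hD : ∀ b, IsClosed (dh 0 b '' {v | dv 0 b v = 0})) (j : ℕ),
    IsClosed (dv i j '' {v | dh i j v = 0}) := by
  intro i
  induction i with
  | zero =>
    intro L I1 I2 I3 I4 I5 I6 I7 dh dv hsq hrow hcol hD j
    apply key (dv 0 j) (dh 0 j) ?_ (hD j)
    rw [hcol 0 j]
    exact isClosed_eq (dv 1 j).continuous continuous_const
  | succ i ih =>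
    intro L I1 I2 I3 I4 I5 I6 I7 dh dv hsq hrow hcol hD j
    have hsq' : ∀ a b (u : L a b), dv a (b + 1) (dh a b u) = dh (a + 1) b (dv a b u) :=
      fun a b u => by simpa using DFunLike.congr_fun (hsq a b) u
    have hD' : ∀ b, IsClosed (dh 1 b '' {v : L 1 b | dv 1 b v = 0}) := by
      intro b
      have e : dh 1 b '' {v : L 1 b | dv 1 b v = 0}
          = dv 0 (b + 1) '' {v : L 0 (b + 1) | dh 0 (b + 1) v = 0} := by
        ext w
        constructor
        · rintro ⟨v, hv, rfl⟩
          have hvr : v ∈ Set.range (dv 0 b) := by rw [hcol 0 b]; exact hv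
          obtain ⟨u, rfl⟩ := hvr
          refine ⟨dh 0 b u, ?_, ?_⟩
          · show dh 0 (b + 1) (dh 0 b u) = 0
            have hm : dh 0 b u ∈ Set.range (dh 0 b) := ⟨u, rfl⟩
            rw [hrow 0 b] at hm; exact hm
          · exact hsq' 0 b u
        · rintro ⟨v, hv, rfl⟩
          have hvr : v ∈ Set.range (dh 0 b) := by rw [hrow 0 b]; exact hv
          obtain ⟨u, rfl⟩ := hvr
          refine ⟨dv 0 b u, ?_, ?_⟩
          · show dv 1 b (dv 0 b u) = 0
            have hm : dv 0 b u ∈ Set.range (dv 0 b) := ⟨u, rfl⟩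
            rw [hcol 0 b] at hm; exact hm
          · exact (hsq' 0 b u).symm
      rw [e]
      apply key (dv 0 (b + 1)) (dh 0 (b + 1)) ?_ (hD (b + 1))
      rw [hcol 0 (b + 1)]
      exact isClosed_eq (dv 1 (b + 1)).continuous continuous_const
    exact ih (L := fun a b => L (a + 1) b)
      (I1 := fun a b => I1 (a + 1) b) (I2 := fun a b => I2 (a + 1) b)
      (I3 := fun a b => I3 (a + 1) b) (I4 := fun a b => I4 (a + 1) b)
      (I5 := fun a b => I5 (a + 1) b) (I6 := fun a b => I6 (a + 1) b)
      (I7 := fun a b => I7 (a + 1) b)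
      (fun a b => dh (a + 1) b) (fun a b => dv (a + 1) b)
      (fun a b => hsq (a + 1) b) (fun a b => hrow (a + 1) b)
      (fun a b => hcol (a + 1) b) hD' j

end Stmt8Aux

/-- double complex closed-range lemma: Let `(L i j)` be a double complex of
Fréchet spaces with horizontal differentials `dh` and vertical differentials `dv`,
augmented on the left by a complex `(K i, dK)` and on top by a complex `(H j, dH)`, with
all rows `0 → K i → L i 0 → L i 1 → ⋯` and all columns `0 → H j → L 0 j → L 1 j → ⋯`
exact, and `K`, `H` carrying the subspace topologies.  If all differentials of the
complex `0 → H 0 → H 1 → ⋯` have closed range, then so do all differentials of the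
complex `0 → K 0 → K 1 → ⋯`. -/
theorem stmt8
    {L : ℕ → ℕ → Type*} {K : ℕ → Type*} {H : ℕ → Type*}
    [∀ i j, AddCommGroup (L i j)] [∀ i j, Module ℂ (L i j)]
    [∀ i j, UniformSpace (L i j)] [∀ i j, IsUniformAddGroup (L i j)]
    [∀ i j, ContinuousSMul ℂ (L i j)] [∀ i j, CompleteSpace (L i j)]
    [∀ i j, TopologicalSpace.MetrizableSpace (L i j)] [∀ i j, LocallyConvexSpace ℝ (L i j)]
    [∀ i, AddCommGroup (K i)] [∀ i, Module ℂ (K i)] [∀ i, UniformSpace (K i)]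
    [∀ i, IsUniformAddGroup (K i)] [∀ i, ContinuousSMul ℂ (K i)]
    [∀ j, AddCommGroup (H j)] [∀ j, Module ℂ (H j)] [∀ j, UniformSpace (H j)]
    [∀ j, IsUniformAddGroup (H j)] [∀ j, ContinuousSMul ℂ (H j)]
    -- differentials of the double complex
    (dh : ∀ i j, L i j →L[ℂ] L i (j + 1))
    (dv : ∀ i j, L i j →L[ℂ] L (i + 1) j)
    -- the augmentations and their differentials
    (ιK : ∀ i, K i →L[ℂ] L i 0) (dK : ∀ i, K i →L[ℂ] K (i + 1))
    (ιH : ∀ j, H j →L[ℂ] L 0 j) (dH : ∀ j, H j →L[ℂ] H (j + 1))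
    -- the double complex commutes
    (hsq : ∀ i j, (dv i (j + 1)).comp (dh i j) = (dh (i + 1) j).comp (dv i j))
    (hKsq : ∀ i, (dv i 0).comp (ιK i) = (ιK (i + 1)).comp (dK i))
    (hHsq : ∀ j, (dh 0 j).comp (ιH j) = (ιH (j + 1)).comp (dH j))
    -- the rows are exact
    (hKinj : ∀ i, Function.Injective (ιK i))
    (hrow0 : ∀ i, Set.range (ιK i) = {x | dh i 0 x = 0})
    (hrow : ∀ i j, Set.range (dh i j) = {x | dh i (j + 1) x = 0})
    -- the columns are exact
    (hHinj : ∀ j, Function.Injective (ιH j))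
    (hcol0 : ∀ j, Set.range (ιH j) = {x | dv 0 j x = 0})
    (hcol : ∀ i j, Set.range (dv i j) = {x | dv (i + 1) j x = 0})
    -- `K i` and `H j` carry the subspace topologies
    (hKtop : ∀ i, Topology.IsInducing (ιK i))
    (hHtop : ∀ j, Topology.IsInducing (ιH j))
    -- the differentials of `H •` have closed range
    (hclosed : ∀ j, IsClosed (Set.range (dH j))) :
    -- then the differentials of `K •` have closed range
    ∀ i, IsClosed (Set.range (dK i)) := by
  intro i
  have hKsq' : ∀ i (k : K i), dv i 0 (ιK i k) = ιK (i + 1) (dK i k) := fun i k => by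
    simpa using DFunLike.congr_fun (hKsq i) k
  have hHsq' : ∀ j (h : H j), dh 0 j (ιH j h) = ιH (j + 1) (dH j h) := fun j h => by
    simpa using DFunLike.congr_fun (hHsq j) h
  have hD : ∀ b, IsClosed (dh 0 b '' {v | dv 0 b v = 0}) := by
    intro b
    have h1 : {v : L 0 b | dv 0 b v = 0} = Set.range (ιH b) := (hcol0 b).symm
    have h2 : dh 0 b '' Set.range (ιH b) = ιH (b + 1) '' Set.range (dH b) := by
      ext w
      constructor
      · rintro ⟨_, ⟨h, rfl⟩, rfl⟩
        exact ⟨dH b h, ⟨h, rfl⟩, (hHsq' b h).symm⟩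
      · rintro ⟨_, ⟨h, rfl⟩, rfl⟩
        exact ⟨ιH b h, ⟨h, rfl⟩, hHsq' b h⟩
    rw [h1, h2]
    have hemb : Topology.IsClosedEmbedding (ιH (b + 1)) := by
      refine ⟨⟨hHtop (b + 1), hHinj (b + 1)⟩, ?_⟩
      rw [hcol0 (b + 1)]
      exact isClosed_eq (dv 0 (b + 1)).continuous continuous_const
    exact hemb.isClosedMap _ (hclosed b)
  have hcl : IsClosed (dv i 0 '' {v | dh i 0 v = 0}) :=
    Stmt8Aux.aux i dh dv hsq hrow hcol hD 0
  have himg : ιK (i + 1) '' Set.range (dK i) = dv i 0 '' {v | dh i 0 v = 0} := by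
    ext w
    constructor
    · rintro ⟨_, ⟨k, rfl⟩, rfl⟩
      refine ⟨ιK i k, ?_, hKsq' i k⟩
      have hm : ιK i k ∈ Set.range (ιK i) := ⟨k, rfl⟩
      rw [hrow0 i] at hm; exact hm
    · rintro ⟨v, hv, rfl⟩
      have hm : v ∈ Set.range (ιK i) := by rw [hrow0 i]; exact hv
      obtain ⟨k, rfl⟩ := hm
      exact ⟨dK i k, ⟨k, rfl⟩, (hKsq' i k).symm⟩
  have hpre : Set.range (dK i) = ιK (i + 1) ⁻¹' (dv i 0 '' {v | dh i 0 v = 0}) := by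
    rw [← himg, Set.preimage_image_eq _ (hKinj (i + 1))]
  rw [hpre]
  exact hcl.preimage (ιK (i + 1)).continuous
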